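/- The solution x* = (I + μL)^{-1} y converges, as μ → ∞, to the orthogonal projection of y onto the kernel of L. -/

import Mathlib

open Matrix Filter

noncomputable section

namespace QPaux

open scoped RealInnerProductSpace

variable {m : ℕ}

def ee {m : ℕ} (x : Fin m → ℝ) : EuclideanSpace ℝ (Fin m) :=
  (WithLp.equiv 2 (Fin m → ℝ)).symm x

lemma inner_ee (x y : Fin m → ℝ) : ⟪ee x, ee y⟫ = x ⬝ᵥ y := by
  simp [ee, PiLp.inner_apply, RCLike.inner_apply, dotProduct]
  exact Finset.sum_congr rfl fun i _ => mul_comm _ _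

lemma ee_sub (x y : Fin m → ℝ) : ee (x - y) = ee x - ee y := rfl

lemma ee_smul (c : ℝ) (x : Fin m → ℝ) : ee (c • x) = c • ee x := rfl

lemma smul_psd (L : Matrix (Fin m) (Fin m) ℝ) (hL : L.PosSemidef) {μ : ℝ} (hμ : 0 ≤ μ) :
    (μ • L).PosSemidef := by
  refine PosSemidef.of_dotProduct_mulVec_nonneg ?_ fun x => ?_
  · unfold Matrix.IsHermitian
    rw [conjTranspose_smul, hL.1.eq]
    simp
  · rw [smul_mulVec, dotProduct_smul]
    exact mul_nonneg hμ (hL.dotProduct_mulVec_nonneg x)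

lemma posDef_one_add (L : Matrix (Fin m) (Fin m) ℝ) (hL : L.PosSemidef) {μ : ℝ} (hμ : 0 ≤ μ) :
    (1 + μ • L).PosDef :=
  Matrix.PosDef.one.add_posSemidef (smul_psd L hL hμ)

lemma norm_inv_mulVec_le (L : Matrix (Fin m) (Fin m) ℝ) (hL : L.PosSemidef) {μ : ℝ}
    (hμ : 0 ≤ μ) (x : Fin m → ℝ) :
    ‖ee ((1 + μ • L)⁻¹ *ᵥ x)‖ ≤ ‖ee x‖ := by
  set A := 1 + μ • L with hA
  have hAd : A.PosDef := posDef_one_add L hL hμ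
  have hdet : IsUnit A.det := (Matrix.isUnit_iff_isUnit_det A).mp hAd.isUnit
  set w := A⁻¹ *ᵥ x with hw
  have hAw : A *ᵥ w = x := by
    rw [hw, mulVec_mulVec, Matrix.mul_nonsing_inv A hdet, one_mulVec]
  have key : ‖ee w‖ ^ 2 ≤ ‖ee w‖ * ‖ee x‖ := by
    have h1 : ‖ee w‖ ^ 2 = w ⬝ᵥ w := by
      rw [← inner_ee, real_inner_self_eq_norm_sq]
    have h2 : w ⬝ᵥ w ≤ w ⬝ᵥ x := by
      rw [← hAw, hA, add_mulVec, one_mulVec, smul_mulVec, dotProduct_add,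
        dotProduct_smul]
      have : 0 ≤ μ * (w ⬝ᵥ (L *ᵥ w)) := by
        have := hL.dotProduct_mulVec_nonneg w
        simp only [star_trivial] at this
        exact mul_nonneg hμ this
      simpa using this
    have h3 : w ⬝ᵥ x ≤ ‖ee w‖ * ‖ee x‖ := by
      rw [← inner_ee]
      exact real_inner_le_norm _ _
    linarith
  rcases eq_or_lt_of_le (norm_nonneg (ee w)) with h | h
  · rw [← h]; exact norm_nonneg _
  · have := key
    rw [sq] at this
    exact le_of_mul_le_mul_left this h

lemma mem_range_of_orth (L : Matrix (Fin m) (Fin m) ℝ) (hL : L.PosSemidef) (q : Fin m → ℝ)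
    (hq : ∀ z : Fin m → ℝ, L *ᵥ z = 0 → q ⬝ᵥ z = 0) :
    ∃ v : Fin m → ℝ, L *ᵥ v = q := by
  set T := Matrix.toEuclideanLin L with hT
  have hsymm : T.IsSymmetric := Matrix.isHermitian_iff_isSymmetric.mp hL.1
  have hker : LinearMap.ker T = (LinearMap.range T)ᗮ := by
    ext x
    simp only [LinearMap.mem_ker, Submodule.mem_orthogonal]
    constructor
    · rintro hx u ⟨v, rfl⟩
      rw [hsymm v x, hx, inner_zero_right]
    · intro h
      have hall : ∀ v : EuclideanSpace ℝ (Fin m), ⟪v, T x⟫ = 0 := by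
        intro v
        rw [← hsymm v x]
        exact h (T v) ⟨v, rfl⟩
      exact inner_self_eq_zero.mp (hall (T x))
  have hrange : (LinearMap.ker T)ᗮ = LinearMap.range T := by
    rw [hker, Submodule.orthogonal_orthogonal]
  have hTapp : ∀ u : EuclideanSpace ℝ (Fin m),
      T u = ee (L *ᵥ (WithLp.equiv 2 (Fin m → ℝ) u)) := by
    intro u
    rw [hT, Matrix.toEuclideanLin_apply]
    rfl
  have hqmem : ee q ∈ (LinearMap.ker T)ᗮ := by
    intro u hu
    rw [LinearMap.mem_ker, hTapp u] at hu
    have h0 : L *ᵥ (WithLp.equiv 2 (Fin m → ℝ) u) = 0 :=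
      (WithLp.equiv 2 (Fin m → ℝ)).symm.injective hu
    have hdot := hq _ h0
    have hu' : u = ee (WithLp.equiv 2 (Fin m → ℝ) u) := (Equiv.symm_apply_apply _ _).symm
    rw [hu', inner_ee, dotProduct_comm]
    exact hdot
  rw [hrange] at hqmem
  obtain ⟨v, hv⟩ := hqmem
  refine ⟨WithLp.equiv 2 (Fin m → ℝ) v, ?_⟩
  rw [hTapp v] at hv
  exact (WithLp.equiv 2 (Fin m → ℝ)).symm.injective hv

end QPaux

open QPaux

theorem qp_solution_tendsto_kernel_projection {m : ℕ}
    (L : Matrix (Fin m) (Fin m) ℝ) (hL : L.PosSemidef)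
    (y p : Fin m → ℝ)
    (hp_ker : L *ᵥ p = 0)
    (hp_orth : ∀ z : Fin m → ℝ, L *ᵥ z = 0 → (y - p) ⬝ᵥ z = 0) :
    Tendsto (fun μ : ℝ => (1 + μ • L)⁻¹ *ᵥ y) atTop (nhds p) := by
  obtain ⟨v, hv⟩ := mem_range_of_orth L hL (y - p) hp_orth
  suffices h : Tendsto (fun μ : ℝ => ee ((1 + μ • L)⁻¹ *ᵥ y)) atTop (nhds (ee p)) by
    have hcont : Continuous (WithLp.equiv 2 (Fin m → ℝ)) := PiLp.continuous_ofLp 2 _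
    have := (hcont.tendsto (ee p)).comp h
    exact this
  rw [← tendsto_sub_nhds_zero_iff]
  apply squeeze_zero_norm' (a := fun μ : ℝ => (2 * ‖ee v‖) / μ)
  · filter_upwards [eventually_gt_atTop (0 : ℝ)] with μ hμ
    have hμ0 : (0:ℝ) ≤ μ := le_of_lt hμ
    set A := 1 + μ • L with hA
    have hAd : A.PosDef := posDef_one_add L hL hμ0
    have hdet : IsUnit A.det := (Matrix.isUnit_iff_isUnit_det A).mp hAd.isUnit
    have hinv : A⁻¹ * A = 1 := Matrix.nonsing_inv_mul A hdet
    have hAp : A *ᵥ p = p := by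
      rw [hA, add_mulVec, one_mulVec, smul_mulVec, hp_ker]
      simp
    have hinvp : A⁻¹ *ᵥ p = p := by
      conv_lhs => rw [← hAp]
      rw [mulVec_mulVec, hinv, one_mulVec]
    have hy : y = p + L *ᵥ v := by
      rw [hv]; abel
    have hkey : A⁻¹ *ᵥ y - p = μ⁻¹ • (v - A⁻¹ *ᵥ v) := by
      have hAv : A *ᵥ v = v + μ • (L *ᵥ v) := by
        rw [hA, add_mulVec, one_mulVec, smul_mulVec]
      have h1 : μ • (A⁻¹ *ᵥ (L *ᵥ v)) = v - A⁻¹ *ᵥ v := by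
        rw [← mulVec_smul]
        have hs : μ • (L *ᵥ v) = A *ᵥ v - v := by rw [hAv]; abel
        rw [hs, mulVec_sub, mulVec_mulVec, hinv, one_mulVec]
      rw [hy, mulVec_add, hinvp, add_sub_cancel_left, ← h1, smul_smul,
        inv_mul_cancel₀ (ne_of_gt hμ), one_smul]
    show ‖ee (A⁻¹ *ᵥ y) - ee p‖ ≤ 2 * ‖ee v‖ / μ
    rw [← ee_sub, hkey, ee_smul, norm_smul]
    have hb : ‖ee (v - A⁻¹ *ᵥ v)‖ ≤ 2 * ‖ee v‖ := by
      rw [ee_sub]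
      calc ‖ee v - ee (A⁻¹ *ᵥ v)‖ ≤ ‖ee v‖ + ‖ee (A⁻¹ *ᵥ v)‖ := norm_sub_le _ _
        _ ≤ ‖ee v‖ + ‖ee v‖ := by
            have := norm_inv_mulVec_le L hL hμ0 v
            linarith
        _ = 2 * ‖ee v‖ := by ring
    have hn : ‖μ⁻¹‖ = μ⁻¹ := by
      rw [Real.norm_eq_abs, abs_of_pos (by positivity)]
    rw [hn, div_eq_inv_mul]
    exact mul_le_mul_of_nonneg_left hb (by positivity)
  · exact Tendsto.div_atTop tendsto_const_nhds tendsto_id
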